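/- Let P be a probability distribution on R^p whose characteristic function vanishes nowhere. Let u_1,…,u_L ∈ R^p be pairwise distinct, let ũ_1,…,ũ_L ∈ R^p be pairwise distinct, and let w_1,…,w_L and w̃_1,…,w̃_L be strictly positive mixing weights with Σ_j w_j = Σ_j w̃_j = 1. If the two location mixtures coincide, i.e., Σ_{j=1}^L w_j·P(· − u_j) = Σ_{j=1}^L w̃_j·P(· − ũ_j) as measures, then there exists a permutation π of {1,…,L} such that u_j = ũ_{π(j)} for all j. -/

import Mathlib

open MeasureTheory

noncomputable section

abbrev Vec (n : ℕ) := Fin n → ℝ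

/-- Characteristic function of a distribution on `ℝ^p`. -/
def charFn {p : ℕ} (P : Measure (Vec p)) (t : Vec p) : ℂ :=
  ∫ x, Complex.exp (Complex.I * ((∑ i, t i * x i : ℝ) : ℂ)) ∂P

def ch {p : ℕ} (x : Vec p) : Multiplicative (Vec p) →* ℂ where
  toFun t := Complex.exp (Complex.I * ((∑ i, (t.toAdd) i * x i : ℝ) : ℂ))
  map_one' := by simp
  map_mul' t s := by
    simp only [toAdd_mul, Pi.add_apply, add_mul, Finset.sum_add_distrib]
    rw [← Complex.exp_add]
    push_cast
    ring_nf

lemma exp_I_real_inj {a b : ℝ} (h : Complex.exp (Complex.I * a) = Complex.exp (Complex.I * b)) :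
    ∃ n : ℤ, a - b = n * (2 * Real.pi) := by
  have h1 : Complex.exp (Complex.I * a - Complex.I * b) = 1 := by
    rw [Complex.exp_sub, h, div_self (Complex.exp_ne_zero _)]
  rw [Complex.exp_eq_one_iff] at h1
  obtain ⟨n, hn⟩ := h1
  refine ⟨n, ?_⟩
  have h2 : Complex.I * ((a : ℂ) - b) = Complex.I * ((n : ℂ) * (2 * Real.pi)) := by
    rw [mul_sub, hn]; ring
  have h3 : ((a : ℂ) - b) = ((n : ℂ) * (2 * Real.pi)) :=
    mul_left_cancel₀ Complex.I_ne_zero h2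
  exact_mod_cast h3

lemma ch_inj {p : ℕ} : Function.Injective (ch (p := p)) := by
  intro x y h
  funext i
  by_contra hne
  have hsingle : ∀ z : Vec p, ∀ s : ℝ, (∑ k, (Pi.single i s : Vec p) k * z k) = s * z i := by
    intro z s
    simp [Pi.single_apply, ite_mul, Finset.sum_ite_eq']
  have key : ∀ s : ℝ, Complex.exp (Complex.I * (s * x i : ℝ)) =
      Complex.exp (Complex.I * (s * y i : ℝ)) := by
    intro s
    have := congrArg (fun f : Multiplicative (Vec p) →* ℂ =>
      f (Multiplicative.ofAdd (Pi.single i s))) h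
    simp only [ch, MonoidHom.coe_mk, OneHom.coe_mk, toAdd_ofAdd] at this
    rw [hsingle x, hsingle y] at this
    exact this
  set d := x i - y i with hd
  have hdne : d ≠ 0 := sub_ne_zero.mpr hne
  obtain ⟨n, hn⟩ := exp_I_real_inj (key (Real.pi / d))
  have h4 : Real.pi = n * (2 * Real.pi) := by
    have : Real.pi / d * x i - Real.pi / d * y i = Real.pi / d * d := by rw [hd]; ring
    rw [this, div_mul_cancel₀ _ hdne] at hn
    exact hn
  have h5 : (1 : ℝ) * Real.pi = (n * 2) * Real.pi := by linarith
  have h6 : (1 : ℝ) = n * 2 := mul_right_cancel₀ Real.pi_ne_zero h5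
  have : (1 : ℤ) = n * 2 := by exact_mod_cast h6
  omega

lemma cont_integrand {p : ℕ} (t : Vec p) :
    Continuous fun x : Vec p => Complex.exp (Complex.I * ((∑ i, t i * x i : ℝ) : ℂ)) := by
  refine Complex.continuous_exp.comp ?_
  exact (continuous_const.mul (Complex.continuous_ofReal.comp
    (continuous_finset_sum _ fun i _ => continuous_const.mul (continuous_apply i))))

lemma integrable_integrand {p : ℕ} (t : Vec p) (μ : Measure (Vec p)) [IsFiniteMeasure μ] :
    Integrable (fun x : Vec p => Complex.exp (Complex.I * ((∑ i, t i * x i : ℝ) : ℂ))) μ := by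
  refine Integrable.mono' (integrable_const 1) ((cont_integrand t).aestronglyMeasurable) ?_
  filter_upwards with x
  rw [Complex.norm_exp]
  simp

lemma charFn_map {p : ℕ} (P : Measure (Vec p)) [IsProbabilityMeasure P] (a t : Vec p) :
    charFn (P.map (fun x => x + a)) t =
      Complex.exp (Complex.I * ((∑ i, t i * a i : ℝ) : ℂ)) * charFn P t := by
  unfold charFn
  rw [integral_map (measurable_add_const a).aemeasurable
    ((cont_integrand t).aestronglyMeasurable)]
  have hpt : ∀ x : Vec p, Complex.exp (Complex.I * ((∑ i, t i * (x + a) i : ℝ) : ℂ)) =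
      Complex.exp (Complex.I * ((∑ i, t i * a i : ℝ) : ℂ)) *
        Complex.exp (Complex.I * ((∑ i, t i * x i : ℝ) : ℂ)) := by
    intro x
    rw [← Complex.exp_add]
    congr 1
    push_cast [Pi.add_apply, mul_add, Finset.sum_add_distrib]
    ring
  simp_rw [hpt]
  rw [integral_const_mul]
end

noncomputable section
lemma charFn_mix {p L : ℕ} (P : Measure (Vec p)) [IsProbabilityMeasure P]
    (u : Fin L → Vec p) (w : Fin L → NNReal) (t : Vec p) :
    charFn (∑ j, (w j : ENNReal) • P.map (fun x => x + u j)) t =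
      ∑ j, ((w j : ℝ) : ℂ) * (Complex.exp (Complex.I * ((∑ i, t i * u j i : ℝ) : ℂ)) * charFn P t) := by
  have hinst : ∀ j, IsProbabilityMeasure (P.map (fun x => x + u j)) := fun j =>
    Measure.isProbabilityMeasure_map (measurable_add_const (u j)).aemeasurable
  unfold charFn
  rw [integral_finset_sum_measure (fun j _ => by
    have := hinst j
    exact (integrable_integrand t (P.map (fun x => x + u j))).smul_measure ENNReal.coe_ne_top)]
  refine Finset.sum_congr rfl fun j _ => ?_
  have := hinst j
  rw [integral_smul_measure]
  rw [show (∫ x, Complex.exp (Complex.I * ((∑ i, t i * x i : ℝ) : ℂ)) ∂(P.map (fun x => x + u j)))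
      = charFn (P.map (fun x => x + u j)) t from rfl, charFn_map]
  rw [ENNReal.coe_toReal, Complex.real_smul]
  rfl

/-- **Lemma C.1**: identifiability of location mixtures.  If two finite location mixtures
of a distribution whose characteristic function vanishes nowhere coincide, the location
parameters agree up to a permutation. -/
theorem statement15 {p L : ℕ}
    (P : Measure (Vec p)) [IsProbabilityMeasure P]
    (hchar : ∀ t : Vec p, charFn P t ≠ 0)
    (u v : Fin L → Vec p)
    (hu : Function.Injective u) (hv : Function.Injective v)
    (w w' : Fin L → NNReal)
    (hw : ∀ j, 0 < w j) (hw' : ∀ j, 0 < w' j)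
    (hsum : ∑ j, w j = 1) (hsum' : ∑ j, w' j = 1)
    (hmix : (∑ j, (w j : ENNReal) • P.map (fun x => x + u j)) =
            (∑ j, (w' j : ENNReal) • P.map (fun x => x + v j))) :
    ∃ π : Equiv.Perm (Fin L), ∀ j, u j = v (π j) := by
  classical
  have key : ∀ t : Multiplicative (Vec p),
      ∑ j, ((w j : ℝ) : ℂ) * ch (u j) t = ∑ j, ((w' j : ℝ) : ℂ) * ch (v j) t := by
    intro t
    have h1 := congrArg (fun μ => charFn μ t.toAdd) hmix
    simp only [charFn_mix] at h1
    have h2 : (∑ j, ((w j : ℝ) : ℂ) * ch (u j) t) * charFn P t.toAdd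
        = (∑ j, ((w' j : ℝ) : ℂ) * ch (v j) t) * charFn P t.toAdd := by
      rw [Finset.sum_mul, Finset.sum_mul]
      simpa [ch, mul_assoc] using h1
    exact mul_right_cancel₀ (hchar _) h2
  set s : Finset (Vec p) := Finset.image u Finset.univ ∪ Finset.image v Finset.univ with hs
  have hus : ∀ j, u j ∈ s := fun j =>
    Finset.mem_union_left _ (Finset.mem_image_of_mem u (Finset.mem_univ j))
  have hvs : ∀ j, v j ∈ s := fun j =>
    Finset.mem_union_right _ (Finset.mem_image_of_mem v (Finset.mem_univ j))
  have hA : ∀ (f : Fin L → Vec p) (c : Fin L → NNReal), (∀ j, f j ∈ s) →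
      ∀ t : Multiplicative (Vec p),
      ∑ x ∈ s, (((∑ j ∈ Finset.univ.filter (fun j => f j = x), (c j : ℝ)) : ℝ) : ℂ) * ch x t
        = ∑ j, ((c j : ℝ) : ℂ) * ch (f j) t := by
    intro f c hf t
    rw [← Finset.sum_fiberwise_of_maps_to (fun j _ => hf j)
      (fun j => ((c j : ℝ) : ℂ) * ch (f j) t)]
    refine Finset.sum_congr rfl fun x hx => ?_
    have hrw : ∀ j ∈ Finset.univ.filter (fun j => f j = x),
        ((c j : ℝ) : ℂ) * ch (f j) t = ((c j : ℝ) : ℂ) * ch x t := fun j hj => by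
      rw [(Finset.mem_filter.mp hj).2]
    rw [Finset.sum_congr rfl hrw, ← Finset.sum_mul]
    norm_cast
  set g : Vec p → ℂ := fun x =>
    ((((∑ j ∈ Finset.univ.filter (fun j => u j = x), (w j : ℝ))
      - ∑ j ∈ Finset.univ.filter (fun j => v j = x), (w' j : ℝ)) : ℝ) : ℂ) with hg
  have hli : LinearIndependent ℂ (fun x : Vec p => ⇑(ch x)) :=
    (linearIndependent_monoidHom (Multiplicative (Vec p)) ℂ).comp ch ch_inj
  have hzero : ∑ x ∈ s, g x • (⇑(ch x)) = 0 := by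
    funext t
    simp only [Finset.sum_apply, Pi.smul_apply, Pi.zero_apply, smul_eq_mul, hg,
      Complex.ofReal_sub, sub_mul, Finset.sum_sub_distrib]
    rw [hA u w hus t, hA v w' hvs t, key t, sub_self]
  have hg0 : ∀ x ∈ s, g x = 0 := fun x hx => linearIndependent_iff'.mp hli s g hzero x hx
  have hexists : ∀ j, ∃ k, v k = u j := by
    intro j
    by_contra hne
    push_neg at hne
    have h0 := hg0 (u j) (hus j)
    have hfu : Finset.univ.filter (fun j' => u j' = u j) = {j} := by
      ext j'; simp [hu.eq_iff]
    have hfv : Finset.univ.filter (fun k => v k = u j) = (∅ : Finset (Fin L)) := by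
      ext k; simp [hne k]
    rw [hg] at h0
    simp only [hfu, hfv, Finset.sum_singleton, Finset.sum_empty, sub_zero,
      Complex.ofReal_eq_zero, NNReal.coe_eq_zero] at h0
    exact (hw j).ne' h0
  choose f hf using hexists
  have hfinj : Function.Injective f := fun a b hab => hu (by rw [← hf a, ← hf b, hab])
  refine ⟨Equiv.ofBijective f (Finite.injective_iff_bijective.mp hfinj), fun j => ?_⟩
  exact (hf j).symm

end
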